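/- arXiv:2312.17707 — 2 statements merged into one kernel-verified Lean document; each statement's English description precedes it below -/
import Mathlib

section
/- Let f : ℝ² → ℝ be a C² function which is bounded, has bounded second partial derivatives, and converges to a limit L ∈ ℝ as ‖x‖ → ∞. Let ε₀ > 0 and let u be a bounded continuous function on the closed slab {(z, x₂, x₃) ∈ ℝ³ : 0 ≤ z ≤ ε₀} which is C² on the open slab {0 < z < ε₀}, satisfies the hyperbolic-harmonicity equation z·(∂²_z u + ∂²_{x₂} u + ∂²_{x₃} u) = ∂_z u on the open slab, satisfies the boundary condition u(0, x₂, x₃) = f(x₂, x₃) for all (x₂, x₃) ∈ ℝ², satisfies inf_{ℝ²} f ≤ u ≤ sup_{ℝ²} f on the slab, and satisfies u(z, x₂, x₃) − f(x₂, x₃) → 0 as ‖(x₂, x₃)‖ → ∞, uniformly in z ∈ [0, ε₀]. Then there exist ε ∈ (0, ε₀] and C > 0 such that |u(z, x₂, x₃) − f(x₂, x₃)| ≤ C·z for all 0 ≤ z ≤ ε and all (x₂, x₃) ∈ ℝ². Equivalently, u = f + z·v on the slab {0 ≤ z ≤ ε} for some bounded function v. -/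
/-- Partial derivative of a curried function `u : ℝ → ℝ → ℝ → ℝ` in the first
variable. -/
noncomputable def pd1 (u : ℝ → ℝ → ℝ → ℝ) (z x y : ℝ) : ℝ :=
  deriv (fun t => u t x y) z

/-- Partial derivative in the second variable. -/
noncomputable def pd2 (u : ℝ → ℝ → ℝ → ℝ) (z x y : ℝ) : ℝ :=
  deriv (fun t => u z t y) x

/-- Partial derivative in the third variable. -/
noncomputable def pd3 (u : ℝ → ℝ → ℝ → ℝ) (z x y : ℝ) : ℝ :=
  deriv (fun t => u z x t) y

/-- Partial derivative of a curried function `f : ℝ → ℝ → ℝ` in the first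
variable. -/
noncomputable def qd1 (f : ℝ → ℝ → ℝ) (x y : ℝ) : ℝ :=
  deriv (fun t => f t y) x

/-- Partial derivative in the second variable. -/
noncomputable def qd2 (f : ℝ → ℝ → ℝ) (x y : ℝ) : ℝ :=
  deriv (fun t => f x t) y

open Set Filter Topology

lemma derivDiff2 {g : ℝ → ℝ} (hg : ContDiff ℝ 2 g) : Differentiable ℝ (deriv g) := by
  rw [show (2 : WithTop ℕ∞) = 1 + 1 from by norm_num] at hg
  exact ((contDiff_succ_iff_deriv.mp hg).2.2).differentiable one_ne_zero

lemma sdt {g : ℝ → ℝ} {a : ℝ} (hg : ContDiffAt ℝ 2 g a) (hmax : IsLocalMax g a) :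
    deriv (deriv g) a ≤ 0 := by
  by_contra hcon
  push_neg at hcon
  have h1 : deriv g a = 0 := hmax.deriv_eq_zero
  obtain ⟨U, hUnhds, hgU⟩ := hg.contDiffOn le_rfl (by simp)
  obtain ⟨V, hVU, hVo, haV⟩ := mem_nhds_iff.mp hUnhds
  have hgV : ContDiffOn ℝ 2 g V := hgU.mono hVU
  have hdg : DifferentiableAt ℝ (deriv g) a := by
    have h2 : ContDiffOn ℝ 1 (deriv g) V :=
      hgV.deriv_of_isOpen hVo (by norm_num)
    exact ((h2.differentiableOn one_ne_zero) a haV).differentiableAt (hVo.mem_nhds haV)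
  have hd : HasDerivAt (deriv g) (deriv (deriv g) a) a := hdg.hasDerivAt
  have hslope := hasDerivAt_iff_tendsto_slope.mp hd
  have hev : ∀ᶠ x in 𝓝[≠] a, 0 < slope (deriv g) a x :=
    hslope.eventually (eventually_gt_nhds hcon)
  have hmono' : 𝓝[>] a ≤ 𝓝[≠] a :=
    nhdsWithin_mono a fun x hx => Set.mem_compl_singleton_iff.mpr (ne_of_gt hx)
  have hev2 : ∀ᶠ x in 𝓝[>] a, 0 < slope (deriv g) a x := hev.filter_mono hmono'
  have hev3 : ∀ᶠ x in 𝓝[>] a, x ∈ V :=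
    eventually_nhdsWithin_of_eventually_nhds (hVo.mem_nhds haV)
  have hev4 : ∀ᶠ x in 𝓝[>] a, g x ≤ g a :=
    eventually_nhdsWithin_of_eventually_nhds hmax
  obtain ⟨b, hb, hIoo⟩ := mem_nhdsGT_iff_exists_Ioo_subset.mp
    ((hev2.and (hev3.and hev4)) : _ )
  set x₁ := (a + b) / 2 with hx₁def
  have hab : a < b := hb
  have hx₁ : x₁ ∈ Ioo a b := ⟨by simp only [hx₁def]; linarith, by simp only [hx₁def]; linarith⟩
  have hpos : ∀ x ∈ Ioo a x₁, 0 < deriv g x := by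
    intro x hx
    have hx' : x ∈ Ioo a b := ⟨hx.1, lt_trans hx.2 hx₁.2⟩
    have hsl := (hIoo hx').1
    rw [slope_def_field, h1, sub_zero] at hsl
    rcases div_pos_iff.mp hsl with ⟨h, _⟩ | ⟨_, h⟩
    · exact h
    · linarith [hx.1]
  have hsub : Icc a x₁ ⊆ V := by
    intro x hx
    rcases eq_or_lt_of_le hx.1 with h | h
    · exact h ▸ haV
    · exact (hIoo ⟨h, lt_of_le_of_lt hx.2 hx₁.2⟩).2.1
  have hcont : ContinuousOn g (Icc a x₁) := (hgV.continuousOn).mono hsub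
  have hmono : StrictMonoOn g (Icc a x₁) :=
    strictMonoOn_of_deriv_pos (convex_Icc a x₁) hcont
      (by rw [interior_Icc]; exact hpos)
  have hgx : g a < g x₁ :=
    hmono (left_mem_Icc.mpr hx₁.1.le) (right_mem_Icc.mpr hx₁.1.le) hx₁.1
  exact absurd (hIoo hx₁).2.2 (not_le.mpr hgx)


lemma keyLemma (ε₀ : ℝ) (hε₀ : 0 < ε₀) (f : ℝ → ℝ → ℝ) (u : ℝ → ℝ → ℝ → ℝ)
    (K B ε C : ℝ) (hK : 0 ≤ K) (hε : 0 < ε) (hεε₀ : ε ≤ ε₀)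
    (hCε : 2 * K * ε < C) (hCB : B ≤ C * ε) (hC : 0 ≤ C)
    (hfC2 : ContDiff ℝ 2 (fun p : ℝ × ℝ => f p.1 p.2))
    (hfsec : ∀ x y : ℝ, qd1 (qd1 f) x y ≤ K ∧ qd2 (qd2 f) x y ≤ K)
    (hucont : ContinuousOn (fun p : ℝ × ℝ × ℝ => u p.1 p.2.1 p.2.2)
      {p : ℝ × ℝ × ℝ | 0 ≤ p.1 ∧ p.1 ≤ ε₀})
    (huC2 : ContDiffOn ℝ 2 (fun p : ℝ × ℝ × ℝ => u p.1 p.2.1 p.2.2)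
      {p : ℝ × ℝ × ℝ | 0 < p.1 ∧ p.1 < ε₀})
    (hharm : ∀ z x y : ℝ, 0 < z → z < ε₀ →
      z * (pd1 (pd1 u) z x y + pd2 (pd2 u) z x y + pd3 (pd3 u) z x y) = pd1 u z x y)
    (hbc : ∀ x y : ℝ, u 0 x y = f x y)
    (hwb : ∀ z x y : ℝ, 0 ≤ z → z ≤ ε₀ → u z x y - f x y ≤ B)
    (hdec : ∀ δ : ℝ, 0 < δ → ∃ R : ℝ, ∀ z x y : ℝ,
      0 ≤ z → z ≤ ε₀ → R ^ 2 ≤ x ^ 2 + y ^ 2 → u z x y - f x y ≤ δ) :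
    ∀ z x y : ℝ, 0 ≤ z → z ≤ ε → u z x y - f x y ≤ C * z := by
  by_contra hcon
  push_neg at hcon
  obtain ⟨z₁, x₁, y₁, hz₁0, hz₁ε, hlt⟩ := hcon
  set h : ℝ × ℝ × ℝ → ℝ := fun p => u p.1 p.2.1 p.2.2 - f p.2.1 p.2.2 - C * p.1 with hdef
  have hp₁pos : 0 < h (z₁, x₁, y₁) := by simp only [hdef]; simp; linarith
  set δ : ℝ := h (z₁, x₁, y₁) / 2 with hδdef
  obtain ⟨R, hR⟩ := hdec δ (by positivity)
  -- points far away have small h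
  have hfar : ∀ z x y : ℝ, 0 ≤ z → z ≤ ε → R ^ 2 ≤ x ^ 2 + y ^ 2 →
      h (z, x, y) ≤ δ := by
    intro z x y hz0 hzε hr
    have := hR z x y hz0 (le_trans hzε hεε₀) hr
    have hCz : 0 ≤ C * z := mul_nonneg hC hz0
    show u z x y - f x y - C * z ≤ δ
    linarith
  have hsq : ∀ t : ℝ, t ∉ Icc (-|R|) |R| → R ^ 2 ≤ t ^ 2 := by
    intro t ht
    rw [Set.mem_Icc, not_and_or, not_le, not_le] at ht
    have h2 : R ^ 2 = |R| ^ 2 := (sq_abs R).symm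
    rcases ht with h | h <;> nlinarith [abs_nonneg R]
  set T : Set (ℝ × ℝ × ℝ) := Icc 0 ε ×ˢ (Icc (-|R|) |R| ×ˢ Icc (-|R|) |R|) with hTdef
  have hTc : IsCompact T := (isCompact_Icc.prod (isCompact_Icc.prod isCompact_Icc))
  have hTsub : T ⊆ {p : ℝ × ℝ × ℝ | 0 ≤ p.1 ∧ p.1 ≤ ε₀} := by
    rintro ⟨z, x, y⟩ hp
    exact ⟨hp.1.1, le_trans hp.1.2 hεε₀⟩
  have hhc : ContinuousOn h {p : ℝ × ℝ × ℝ | 0 ≤ p.1 ∧ p.1 ≤ ε₀} := by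
    apply ContinuousOn.sub
    apply ContinuousOn.sub hucont
    · exact (hfC2.continuous.comp
        ((continuous_fst.comp continuous_snd).prodMk
          (continuous_snd.comp continuous_snd))).continuousOn
    · exact (continuous_const.mul continuous_fst).continuousOn
  -- the bad point is in T
  have hp₁T : (z₁, x₁, y₁) ∈ T := by
    by_contra hnot
    have : R ^ 2 ≤ x₁ ^ 2 + y₁ ^ 2 := by
      simp only [hTdef, Set.mem_prod] at hnot
      push_neg at hnot
      by_cases hx : x₁ ∈ Icc (-|R|) |R|
      · by_cases hy : y₁ ∈ Icc (-|R|) |R|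
        · exact absurd (hnot ⟨hz₁0, hz₁ε⟩ hx) (by simp [hy])
        · nlinarith [hsq y₁ hy, sq_nonneg x₁]
      · nlinarith [hsq x₁ hx, sq_nonneg y₁]
    have := hfar z₁ x₁ y₁ hz₁0 hz₁ε this
    rw [hδdef] at this
    linarith
  obtain ⟨pm, hpmT, hpmmax⟩ := hTc.exists_isMaxOn ⟨(z₁, x₁, y₁), hp₁T⟩
    (hhc.mono hTsub)
  obtain ⟨z₀, x₀, y₀⟩ := pm
  have hpmval : 0 < h (z₀, x₀, y₀) := lt_of_lt_of_le hp₁pos (hpmmax hp₁T)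
  -- global maximum over the slab
  have hglob : ∀ z x y : ℝ, 0 ≤ z → z ≤ ε → h (z, x, y) ≤ h (z₀, x₀, y₀) := by
    intro z x y hz0 hzε
    by_cases hq : (z, x, y) ∈ T
    · exact hpmmax hq
    · have : R ^ 2 ≤ x ^ 2 + y ^ 2 := by
        simp only [hTdef, Set.mem_prod] at hq
        push_neg at hq
        by_cases hx : x ∈ Icc (-|R|) |R|
        · by_cases hy : y ∈ Icc (-|R|) |R|
          · exact absurd (hq ⟨hz0, hzε⟩ hx) (by simp [hy])
          · nlinarith [hsq y hy, sq_nonneg x]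
        · nlinarith [hsq x hx, sq_nonneg y]
      have h2 := hfar z x y hz0 hzε this
      rw [hδdef] at h2
      have h3 : h (z₁, x₁, y₁) ≤ h (z₀, x₀, y₀) := hpmmax hp₁T
      refine le_of_lt (lt_of_le_of_lt h2 (lt_of_lt_of_le (by linarith) h3))
  have hz₀mem : z₀ ∈ Icc (0:ℝ) ε := hpmT.1
  -- z₀ is interior
  have hz₀pos : 0 < z₀ := by
    rcases eq_or_lt_of_le hz₀mem.1 with hzz | hzz
    · exfalso
      have : h (z₀, x₀, y₀) = 0 := by
        simp only [hdef, ← hzz]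
        simp [hbc x₀ y₀]
      linarith
    · exact hzz
  have hz₀ltε : z₀ < ε := by
    rcases eq_or_lt_of_le hz₀mem.2 with hzz | hzz
    · exfalso
      have hb := hwb ε x₀ y₀ hε.le hεε₀
      have : h (z₀, x₀, y₀) ≤ B - C * ε := by
        simp only [hdef, hzz]
        simp
        linarith
      linarith
    · exact hzz
  have hz₀ltε₀ : z₀ < ε₀ := lt_of_lt_of_le hz₀ltε hεε₀
  -- openness of the slab
  have hO : IsOpen {p : ℝ × ℝ × ℝ | 0 < p.1 ∧ p.1 < ε₀} := by
    have : {p : ℝ × ℝ × ℝ | 0 < p.1 ∧ p.1 < ε₀}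
        = (fun p : ℝ × ℝ × ℝ => p.1) ⁻¹' Ioo 0 ε₀ := rfl
    rw [this]
    exact isOpen_Ioo.preimage continuous_fst
  -- the z-slice of u is C² at interior times
  have hg1At : ∀ t ∈ Ioo (0:ℝ) ε₀, ContDiffAt ℝ 2 (fun s => u s x₀ y₀) t := by
    intro t ht
    have hF : ContDiffAt ℝ 2 (fun p : ℝ × ℝ × ℝ => u p.1 p.2.1 p.2.2) (t, x₀, y₀) :=
      huC2.contDiffAt (hO.mem_nhds ⟨ht.1, ht.2⟩)
    exact hF.comp t (contDiffAt_id.prodMk contDiffAt_const)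
  have hg1z₀ : ContDiffAt ℝ 2 (fun s => u s x₀ y₀) z₀ := hg1At z₀ ⟨hz₀pos, hz₀ltε₀⟩
  have hzloc : IsLocalMax (fun t => u t x₀ y₀ - f x₀ y₀ - C * t) z₀ := by
    have hmem : Ioo (0:ℝ) ε ∈ 𝓝 z₀ := isOpen_Ioo.mem_nhds ⟨hz₀pos, hz₀ltε⟩
    filter_upwards [hmem] with t ht
    exact hglob t x₀ y₀ ht.1.le ht.2.le
  have e1 : deriv (fun t => u t x₀ y₀) z₀ = C := by
    have h1 : HasDerivAt (fun s => u s x₀ y₀) (deriv (fun s => u s x₀ y₀) z₀) z₀ :=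
      (hg1z₀.differentiableAt (by norm_num)).hasDerivAt
    have h2 : HasDerivAt (fun t : ℝ => C * t) C z₀ := by
      simpa using (hasDerivAt_id z₀).const_mul C
    have hdz : HasDerivAt (fun t => u t x₀ y₀ - f x₀ y₀ - C * t)
        (deriv (fun s => u s x₀ y₀) z₀ - C) z₀ := (h1.sub_const (f x₀ y₀)).sub h2
    have h0 := hzloc.deriv_eq_zero
    rw [hdz.deriv] at h0
    linarith
  have e2 : deriv (deriv (fun s => u s x₀ y₀)) z₀ ≤ 0 := by
    have hCAt : ContDiffAt ℝ 2 (fun t => u t x₀ y₀ - f x₀ y₀ - C * t) z₀ :=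
      (hg1z₀.sub contDiffAt_const).sub (contDiffAt_const.mul contDiffAt_id)
    have hsd := sdt hCAt hzloc
    have hsd' : deriv (fun t => deriv (fun s => u s x₀ y₀ - f x₀ y₀ - C * s) t) z₀ ≤ 0 := hsd
    have hE : (fun t => deriv (fun s => u s x₀ y₀ - f x₀ y₀ - C * s) t)
        =ᶠ[𝓝 z₀] (fun t => deriv (fun s => u s x₀ y₀) t - C) := by
      filter_upwards [isOpen_Ioo.mem_nhds (⟨hz₀pos, hz₀ltε₀⟩ : z₀ ∈ Ioo (0:ℝ) ε₀)] with t ht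
      have h1 : HasDerivAt (fun s => u s x₀ y₀) (deriv (fun s => u s x₀ y₀) t) t :=
        ((hg1At t ht).differentiableAt (by norm_num)).hasDerivAt
      have h2 : HasDerivAt (fun s : ℝ => C * s) C t := by
        simpa using (hasDerivAt_id t).const_mul C
      exact ((h1.sub_const (f x₀ y₀)).sub h2).deriv
    rw [hE.deriv_eq, deriv_sub_const] at hsd'
    exact hsd'
  -- x-slice
  have hgx : ContDiff ℝ 2 (fun t => u z₀ t y₀) := by
    rw [contDiff_iff_contDiffAt]
    intro t
    have hF : ContDiffAt ℝ 2 (fun p : ℝ × ℝ × ℝ => u p.1 p.2.1 p.2.2) (z₀, t, y₀) :=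
      huC2.contDiffAt (hO.mem_nhds ⟨hz₀pos, hz₀ltε₀⟩)
    exact hF.comp t (contDiffAt_const.prodMk (contDiffAt_id.prodMk contDiffAt_const))
  have hfx : ContDiff ℝ 2 (fun t => f t y₀) :=
    hfC2.comp (contDiff_id.prodMk contDiff_const)
  have hxloc : IsLocalMax (fun t => u z₀ t y₀ - f t y₀ - C * z₀) x₀ :=
    Filter.Eventually.of_forall fun t => hglob z₀ t y₀ hz₀pos.le hz₀ltε.le
  have e3 : deriv (deriv (fun t => u z₀ t y₀)) x₀
      ≤ deriv (deriv (fun t => f t y₀)) x₀ := by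
    have hCAt : ContDiffAt ℝ 2 (fun t => u z₀ t y₀ - f t y₀ - C * z₀) x₀ :=
      ((hgx.contDiffAt).sub (hfx.contDiffAt)).sub contDiffAt_const
    have hsd := sdt hCAt hxloc
    have hsd' : deriv (fun t => deriv (fun s => u z₀ s y₀ - f s y₀ - C * z₀) t) x₀ ≤ 0 := hsd
    have hE : (fun t => deriv (fun s => u z₀ s y₀ - f s y₀ - C * z₀) t)
        = (fun t => deriv (fun s => u z₀ s y₀) t - deriv (fun s => f s y₀) t) := by
      funext t
      have h1 : HasDerivAt (fun s => u z₀ s y₀) (deriv (fun s => u z₀ s y₀) t) t :=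
        (hgx.differentiable (by norm_num) t).hasDerivAt
      have h2 : HasDerivAt (fun s => f s y₀) (deriv (fun s => f s y₀) t) t :=
        (hfx.differentiable (by norm_num) t).hasDerivAt
      exact ((h1.sub h2).sub_const _).deriv
    rw [hE, deriv_fun_sub (derivDiff2 hgx x₀) (derivDiff2 hfx x₀)] at hsd'
    linarith
  -- y-slice
  have hgy : ContDiff ℝ 2 (fun t => u z₀ x₀ t) := by
    rw [contDiff_iff_contDiffAt]
    intro t
    have hF : ContDiffAt ℝ 2 (fun p : ℝ × ℝ × ℝ => u p.1 p.2.1 p.2.2) (z₀, x₀, t) :=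
      huC2.contDiffAt (hO.mem_nhds ⟨hz₀pos, hz₀ltε₀⟩)
    exact hF.comp (f := fun s : ℝ => (z₀, x₀, s)) t (contDiffAt_const.prodMk (contDiffAt_const.prodMk contDiffAt_id))
  have hfy : ContDiff ℝ 2 (fun t => f x₀ t) :=
    hfC2.comp (contDiff_const.prodMk contDiff_id)
  have hyloc : IsLocalMax (fun t => u z₀ x₀ t - f x₀ t - C * z₀) y₀ :=
    Filter.Eventually.of_forall fun t => hglob z₀ x₀ t hz₀pos.le hz₀ltε.le
  have e4 : deriv (deriv (fun t => u z₀ x₀ t)) y₀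
      ≤ deriv (deriv (fun t => f x₀ t)) y₀ := by
    have hCAt : ContDiffAt ℝ 2 (fun t => u z₀ x₀ t - f x₀ t - C * z₀) y₀ :=
      ((hgy.contDiffAt).sub (hfy.contDiffAt)).sub contDiffAt_const
    have hsd := sdt hCAt hyloc
    have hsd' : deriv (fun t => deriv (fun s => u z₀ x₀ s - f x₀ s - C * z₀) t) y₀ ≤ 0 := hsd
    have hE : (fun t => deriv (fun s => u z₀ x₀ s - f x₀ s - C * z₀) t)
        = (fun t => deriv (fun s => u z₀ x₀ s) t - deriv (fun s => f x₀ s) t) := by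
      funext t
      have h1 : HasDerivAt (fun s => u z₀ x₀ s) (deriv (fun s => u z₀ x₀ s) t) t :=
        (hgy.differentiable (by norm_num) t).hasDerivAt
      have h2 : HasDerivAt (fun s => f x₀ s) (deriv (fun s => f x₀ s) t) t :=
        (hfy.differentiable (by norm_num) t).hasDerivAt
      exact ((h1.sub h2).sub_const _).deriv
    rw [hE, deriv_fun_sub (derivDiff2 hgy y₀) (derivDiff2 hfy y₀)] at hsd'
    linarith
  -- put everything together using the PDE
  have hharm' := hharm z₀ x₀ y₀ hz₀pos hz₀ltε₀
  have r1 : pd1 u z₀ x₀ y₀ = deriv (fun t => u t x₀ y₀) z₀ := rfl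
  have r2 : pd1 (pd1 u) z₀ x₀ y₀ = deriv (deriv (fun t => u t x₀ y₀)) z₀ := rfl
  have r3 : pd2 (pd2 u) z₀ x₀ y₀ = deriv (deriv (fun t => u z₀ t y₀)) x₀ := rfl
  have r4 : pd3 (pd3 u) z₀ x₀ y₀ = deriv (deriv (fun t => u z₀ x₀ t)) y₀ := rfl
  have r5 : qd1 (qd1 f) x₀ y₀ = deriv (deriv (fun t => f t y₀)) x₀ := rfl
  have r6 : qd2 (qd2 f) x₀ y₀ = deriv (deriv (fun t => f x₀ t)) y₀ := rfl
  rw [r1, r2, r3, r4, e1] at hharm'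
  have hKx := (hfsec x₀ y₀).1
  have hKy := (hfsec x₀ y₀).2
  rw [r5] at hKx
  rw [r6] at hKy
  have hS : deriv (deriv (fun t => u t x₀ y₀)) z₀ + deriv (deriv (fun t => u z₀ t y₀)) x₀
      + deriv (deriv (fun t => u z₀ x₀ t)) y₀ ≤ 2 * K := by linarith
  have h5 : z₀ * (deriv (deriv (fun t => u t x₀ y₀)) z₀ + deriv (deriv (fun t => u z₀ t y₀)) x₀
      + deriv (deriv (fun t => u z₀ x₀ t)) y₀) ≤ z₀ * (2 * K) :=
    mul_le_mul_of_nonneg_left hS hz₀pos.le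
  have h6 : z₀ * (2 * K) ≤ ε * (2 * K) :=
    mul_le_mul_of_nonneg_right hz₀ltε.le (by linarith)
  nlinarith [hharm', h5, h6, hCε]

/-- Boundary behaviour of a bounded hyperbolically harmonic function on the
slab `{0 ≤ z ≤ ε₀}` in the upper half-space model: if `f : ℝ² → ℝ` is C²,
bounded, with bounded second partial derivatives and a limit `L` at infinity,
and if `u` is bounded, continuous on the closed slab, C² on the open slab,
satisfies `z·(∂²_z u + ∂²_{x₂} u + ∂²_{x₃} u) = ∂_z u` there, has boundary
value `f` at `z = 0`, is pinched between `inf f` and `sup f`, and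
`u − f → 0` uniformly in `z` as `‖(x₂,x₃)‖ → ∞`, then `|u − f| ≤ C·z` on a
smaller slab `{0 ≤ z ≤ ε}`; equivalently `u = f + z·v` with `v` bounded. -/
theorem boundary_expansion_of_harmonic
    (f : ℝ → ℝ → ℝ) (L : ℝ)
    (hfC2 : ContDiff ℝ 2 (fun p : ℝ × ℝ => f p.1 p.2))
    (hfbdd : ∃ M : ℝ, ∀ x y : ℝ, |f x y| ≤ M)
    (hfsecond : ∃ K : ℝ, ∀ x y : ℝ,
      |qd1 (qd1 f) x y| ≤ K ∧ |qd1 (qd2 f) x y| ≤ K ∧ |qd2 (qd2 f) x y| ≤ K)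
    (hflim : ∀ δ : ℝ, 0 < δ → ∃ R : ℝ, ∀ x y : ℝ,
      R ^ 2 ≤ x ^ 2 + y ^ 2 → |f x y - L| ≤ δ)
    (ε₀ : ℝ) (hε₀ : 0 < ε₀)
    (u : ℝ → ℝ → ℝ → ℝ)
    (hubdd : ∃ M : ℝ, ∀ z x y : ℝ, 0 ≤ z → z ≤ ε₀ → |u z x y| ≤ M)
    (hucont : ContinuousOn (fun p : ℝ × ℝ × ℝ => u p.1 p.2.1 p.2.2)
      {p : ℝ × ℝ × ℝ | 0 ≤ p.1 ∧ p.1 ≤ ε₀})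
    (huC2 : ContDiffOn ℝ 2 (fun p : ℝ × ℝ × ℝ => u p.1 p.2.1 p.2.2)
      {p : ℝ × ℝ × ℝ | 0 < p.1 ∧ p.1 < ε₀})
    (hharm : ∀ z x y : ℝ, 0 < z → z < ε₀ →
      z * (pd1 (pd1 u) z x y + pd2 (pd2 u) z x y + pd3 (pd3 u) z x y)
        = pd1 u z x y)
    (hbc : ∀ x y : ℝ, u 0 x y = f x y)
    (hpinch : ∀ z x y : ℝ, 0 ≤ z → z ≤ ε₀ →
      sInf (Set.range fun p : ℝ × ℝ => f p.1 p.2) ≤ u z x y ∧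
      u z x y ≤ sSup (Set.range fun p : ℝ × ℝ => f p.1 p.2))
    (hdecay : ∀ δ : ℝ, 0 < δ → ∃ R : ℝ, ∀ z x y : ℝ,
      0 ≤ z → z ≤ ε₀ → R ^ 2 ≤ x ^ 2 + y ^ 2 → |u z x y - f x y| ≤ δ) :
    ∃ ε : ℝ, 0 < ε ∧ ε ≤ ε₀ ∧ ∃ C : ℝ, 0 < C ∧
      ∀ z x y : ℝ, 0 ≤ z → z ≤ ε → |u z x y - f x y| ≤ C * z := by
  obtain ⟨Mf, hMf⟩ := hfbdd
  obtain ⟨K, hKb⟩ := hfsecond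
  obtain ⟨M, hM⟩ := hubdd
  have hK0 : 0 ≤ K := le_trans (abs_nonneg _) (hKb 0 0).1
  have hB0 : 0 ≤ M + Mf := by
    have h1 := hM 0 0 0 le_rfl hε₀.le
    have h2 := hMf 0 0
    have h3 := abs_nonneg (u 0 0 0)
    have h4 := abs_nonneg (f 0 0)
    linarith
  have hε : 0 < min ε₀ 1 := lt_min hε₀ one_pos
  have hεε₀ : min ε₀ 1 ≤ ε₀ := min_le_left _ _
  have hε1 : min ε₀ 1 ≤ 1 := min_le_right _ _
  have hC : 0 < (M + Mf) / min ε₀ 1 + 2 * K + 1 := by positivity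
  have hCε : 2 * K * min ε₀ 1 < (M + Mf) / min ε₀ 1 + 2 * K + 1 := by
    have h1 : 2 * K * min ε₀ 1 ≤ 2 * K := by nlinarith
    have h2 : 0 ≤ (M + Mf) / min ε₀ 1 := div_nonneg hB0 hε.le
    linarith
  have hCB : M + Mf ≤ ((M + Mf) / min ε₀ 1 + 2 * K + 1) * min ε₀ 1 := by
    have hBε : (M + Mf) / min ε₀ 1 * min ε₀ 1 = M + Mf :=
      div_mul_cancel₀ (M + Mf) hε.ne'
    nlinarith [mul_nonneg (by linarith : (0:ℝ) ≤ 2 * K + 1) hε.le]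
  have hwb : ∀ z x y : ℝ, 0 ≤ z → z ≤ ε₀ → u z x y - f x y ≤ M + Mf := by
    intro z x y hz hzε₀
    have h1 := abs_le.mp (hM z x y hz hzε₀)
    have h2 := abs_le.mp (hMf x y)
    linarith
  have hup := keyLemma ε₀ hε₀ f u K (M + Mf) (min ε₀ 1)
    ((M + Mf) / min ε₀ 1 + 2 * K + 1) hK0 hε hεε₀ hCε hCB hC.le hfC2
    (fun x y => ⟨le_trans (le_abs_self _) (hKb x y).1,
      le_trans (le_abs_self _) (hKb x y).2.2⟩)
    hucont huC2 hharm hbc hwb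
    (fun δ hδ => (hdecay δ hδ).imp fun R hR z x y hz hzε₀ hr =>
      (abs_le.mp (hR z x y hz hzε₀ hr)).2)
  -- negated data
  have hfC2' : ContDiff ℝ 2 (fun p : ℝ × ℝ => -(f p.1 p.2)) := hfC2.neg
  have hfsec' : ∀ x y : ℝ, qd1 (qd1 fun a b => -(f a b)) x y ≤ K ∧
      qd2 (qd2 fun a b => -(f a b)) x y ≤ K := by
    intro x y
    have h1 : qd1 (qd1 fun a b => -(f a b)) x y = -(qd1 (qd1 f) x y) := by
      simp only [qd1, deriv.fun_neg]
    have h2 : qd2 (qd2 fun a b => -(f a b)) x y = -(qd2 (qd2 f) x y) := by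
      simp only [qd2, deriv.fun_neg]
    constructor
    · rw [h1]
      have := abs_le.mp (hKb x y).1
      linarith
    · rw [h2]
      have := abs_le.mp (hKb x y).2.2
      linarith
  have hucont' : ContinuousOn (fun p : ℝ × ℝ × ℝ => -(u p.1 p.2.1 p.2.2))
      {p : ℝ × ℝ × ℝ | 0 ≤ p.1 ∧ p.1 ≤ ε₀} := hucont.neg
  have huC2' : ContDiffOn ℝ 2 (fun p : ℝ × ℝ × ℝ => -(u p.1 p.2.1 p.2.2))
      {p : ℝ × ℝ × ℝ | 0 < p.1 ∧ p.1 < ε₀} := huC2.neg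
  have hharm' : ∀ z x y : ℝ, 0 < z → z < ε₀ →
      z * (pd1 (pd1 fun a b c => -(u a b c)) z x y
        + pd2 (pd2 fun a b c => -(u a b c)) z x y
        + pd3 (pd3 fun a b c => -(u a b c)) z x y)
        = pd1 (fun a b c => -(u a b c)) z x y := by
    intro z x y hz hz'
    have h0 := hharm z x y hz hz'
    have h1 : pd1 (pd1 fun a b c => -(u a b c)) z x y = -(pd1 (pd1 u) z x y) := by
      simp only [pd1, deriv.fun_neg]
    have h2 : pd2 (pd2 fun a b c => -(u a b c)) z x y = -(pd2 (pd2 u) z x y) := by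
      simp only [pd2, deriv.fun_neg]
    have h3 : pd3 (pd3 fun a b c => -(u a b c)) z x y = -(pd3 (pd3 u) z x y) := by
      simp only [pd3, deriv.fun_neg]
    have h4 : pd1 (fun a b c => -(u a b c)) z x y = -(pd1 u z x y) := by
      simp only [pd1, deriv.fun_neg]
    rw [h1, h2, h3, h4]
    linarith
  have hbc' : ∀ x y : ℝ, -(u 0 x y) = -(f x y) := fun x y => by rw [hbc]
  have hwb' : ∀ z x y : ℝ, 0 ≤ z → z ≤ ε₀ → -(u z x y) - -(f x y) ≤ M + Mf := by
    intro z x y hz hzε₀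
    have h1 := abs_le.mp (hM z x y hz hzε₀)
    have h2 := abs_le.mp (hMf x y)
    linarith
  have hdown := keyLemma ε₀ hε₀ (fun a b => -(f a b)) (fun a b c => -(u a b c))
    K (M + Mf) (min ε₀ 1)
    ((M + Mf) / min ε₀ 1 + 2 * K + 1) hK0 hε hεε₀ hCε hCB hC.le hfC2'
    hfsec' hucont' huC2' hharm' hbc' hwb'
    (fun δ hδ => (hdecay δ hδ).imp fun R hR z x y hz hzε₀ hr => by
      have h9 := abs_le.mp (hR z x y hz hzε₀ hr)
      show -u z x y - -f x y ≤ δ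
      linarith)
  refine ⟨min ε₀ 1, hε, hεε₀, (M + Mf) / min ε₀ 1 + 2 * K + 1, hC, ?_⟩
  intro z x y hz hzε
  have h1 := hup z x y hz hzε
  have h2 := hdown z x y hz hzε
  rw [abs_le]
  constructor
  · linarith
  · exact h1
end

section
/- Let ε > 0 and let w be a bounded continuous function on the closed slab {(z, x₂, x₃) ∈ ℝ³ : 0 ≤ z ≤ ε} which is C² on the open slab {0 < z < ε} and satisfies the differential inequality z·(∂²_z w + ∂²_{x₂} w + ∂²_{x₃} w) − ∂_z w ≥ 0 on the open slab (i.e. w is subharmonic for the hyperbolic Laplacian). Suppose w(0, x₂, x₃) ≤ 0 and w(ε, x₂, x₃) ≤ 0 for all (x₂, x₃) ∈ ℝ², and that limsup of sup_{z ∈ [0,ε]} w(z, x₂, x₃) as ‖(x₂, x₃)‖ → ∞ is ≤ 0. Then w ≤ 0 on the whole slab. -/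
open Set Filter Topology

/-- Second derivative test: at a local maximum, the second derivative is
nonpositive (assuming differentiability near the point and second-order
differentiability at the point). -/
lemma second_deriv_nonpos_of_isLocalMax {f : ℝ → ℝ} {a : ℝ}
    (hmax : IsLocalMax f a)
    (hf : ∀ᶠ t in 𝓝 a, DifferentiableAt ℝ f t)
    (hf' : DifferentiableAt ℝ (deriv f) a) :
    deriv (deriv f) a ≤ 0 := by
  by_contra h
  push_neg at h
  have hg0 : deriv f a = 0 := hmax.deriv_eq_zero
  have hslope : Tendsto (slope (deriv f) a) (𝓝[≠] a) (𝓝 (deriv (deriv f) a)) :=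
    hasDerivAt_iff_tendsto_slope.mp hf'.hasDerivAt
  have hpos : ∀ᶠ t in 𝓝[≠] a, 0 < slope (deriv f) a t :=
    hslope.eventually (eventually_gt_nhds h)
  have hmono : 𝓝[>] a ≤ 𝓝[≠] a :=
    nhdsWithin_mono a (fun t ht => ne_of_gt ht)
  have hpos' : ∀ᶠ t in 𝓝[>] a, 0 < deriv f t := by
    filter_upwards [hpos.filter_mono hmono, self_mem_nhdsWithin] with t hst ht
    rw [slope_def_field, hg0, sub_zero] at hst
    have hta : 0 < t - a := sub_pos.mpr ht
    have := mul_pos hst hta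
    rwa [div_mul_cancel₀ _ (ne_of_gt hta)] at this
  have hev : ∀ᶠ t in 𝓝[>] a,
      0 < deriv f t ∧ DifferentiableAt ℝ f t ∧ f t ≤ f a := by
    have h2 : ∀ᶠ t in 𝓝[>] a, DifferentiableAt ℝ f t ∧ f t ≤ f a :=
      (hf.and hmax).filter_mono nhdsWithin_le_nhds
    filter_upwards [hpos', h2] with t h1 h2
    exact ⟨h1, h2⟩
  obtain ⟨b, hab, hb⟩ := (nhdsGT_basis a).eventually_iff.mp hev
  set m := (a + b) / 2 with hm
  have ham : a < m := by simp only [hm]; linarith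
  have hmb : m < b := by simp only [hm]; linarith
  have hsm : StrictMonoOn f (Icc a m) := by
    apply strictMonoOn_of_deriv_pos (convex_Icc a m)
    · intro t ht
      rcases eq_or_lt_of_le ht.1 with rfl | hlt
      · exact hf.self_of_nhds.continuousAt.continuousWithinAt
      · exact (hb ⟨hlt, lt_of_le_of_lt ht.2 hmb⟩).2.1.continuousAt.continuousWithinAt
    · intro t ht
      rw [interior_Icc] at ht
      exact (hb ⟨ht.1, ht.2.trans hmb⟩).1
  have h1 : f a < f m :=
    hsm (left_mem_Icc.mpr ham.le) (right_mem_Icc.mpr ham.le) ham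
  have h2 : f m ≤ f a := (hb ⟨ham, hmb⟩).2.2
  linarith

/-- Maximum principle for hyperbolically subharmonic functions on the slab
`{0 ≤ z ≤ ε}` in the upper half-space model of 3-dimensional hyperbolic space:
if `w` is bounded and continuous on the closed slab, C² on the open slab,
satisfies `z·(∂²_z w + ∂²_{x₂} w + ∂²_{x₃} w) − ∂_z w ≥ 0` there (i.e. is
subharmonic for the hyperbolic Laplacian), is `≤ 0` on both boundary planes
`{z = 0}` and `{z = ε}`, and has `limsup ≤ 0` as `‖(x₂,x₃)‖ → ∞` (uniformly
in `z`), then `w ≤ 0` on the whole slab. -/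
theorem max_principle_slab
    (ε : ℝ) (hε : 0 < ε)
    (w : ℝ → ℝ → ℝ → ℝ)
    (hwbdd : ∃ M : ℝ, ∀ z x y : ℝ, 0 ≤ z → z ≤ ε → |w z x y| ≤ M)
    (hwcont : ContinuousOn (fun p : ℝ × ℝ × ℝ => w p.1 p.2.1 p.2.2)
      {p : ℝ × ℝ × ℝ | 0 ≤ p.1 ∧ p.1 ≤ ε})
    (hwC2 : ContDiffOn ℝ 2 (fun p : ℝ × ℝ × ℝ => w p.1 p.2.1 p.2.2)
      {p : ℝ × ℝ × ℝ | 0 < p.1 ∧ p.1 < ε})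
    (hsub : ∀ z x y : ℝ, 0 < z → z < ε →
      0 ≤ z * (pd1 (pd1 w) z x y + pd2 (pd2 w) z x y + pd3 (pd3 w) z x y)
        - pd1 w z x y)
    (hbc0 : ∀ x y : ℝ, w 0 x y ≤ 0)
    (hbcε : ∀ x y : ℝ, w ε x y ≤ 0)
    (hlimsup : ∀ δ : ℝ, 0 < δ → ∃ R : ℝ, ∀ z x y : ℝ,
      0 ≤ z → z ≤ ε → R ^ 2 ≤ x ^ 2 + y ^ 2 → w z x y ≤ δ) :
    ∀ z x y : ℝ, 0 ≤ z → z ≤ ε → w z x y ≤ 0 := by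
  -- the key quantitative step
  have key : ∀ δ : ℝ, 0 < δ → ∀ z x y : ℝ, 0 ≤ z → z ≤ ε → w z x y ≤ δ := by
    intro δ hδ z x y hz hzε
    obtain ⟨R₀, hR₀⟩ := hlimsup (δ / 2) (by positivity)
    set R : ℝ := |R₀| with hRdef
    have hRnn : 0 ≤ R := abs_nonneg _
    have hRsq : R ^ 2 = R₀ ^ 2 := sq_abs R₀
    set η : ℝ := δ / (2 * ε) with hηdef
    have hηpos : 0 < η := by positivity
    have hηε : η * ε = δ / 2 := by
      rw [hηdef, div_mul_eq_mul_div, mul_div_mul_right _ _ hε.ne']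
    -- if the point is far away, we are done
    by_cases hfar : R₀ ^ 2 ≤ x ^ 2 + y ^ 2
    · have := hR₀ z x y hz hzε hfar
      linarith
    push_neg at hfar
    -- the point lies in the compact box Q
    have hx2 : x ^ 2 ≤ R ^ 2 := by rw [hRsq]; nlinarith [sq_nonneg y]
    have hy2 : y ^ 2 ≤ R ^ 2 := by rw [hRsq]; nlinarith [sq_nonneg x]
    have habs : ∀ a : ℝ, a ^ 2 ≤ R ^ 2 → -R ≤ a ∧ a ≤ R := by
      intro a ha
      have h1 : |a| ≤ R := by
        have := Real.sqrt_le_sqrt ha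
        rwa [Real.sqrt_sq_eq_abs, Real.sqrt_sq hRnn] at this
      exact abs_le.mp h1
    have hxR : -R ≤ x ∧ x ≤ R := habs x hx2
    have hyR : -R ≤ y ∧ y ≤ R := habs y hy2
    set V : ℝ × ℝ × ℝ → ℝ := fun p => w p.1 p.2.1 p.2.2 - η * p.1 with hVdef
    set Q : Set (ℝ × ℝ × ℝ) := Icc 0 ε ×ˢ (Icc (-R) R ×ˢ Icc (-R) R) with hQdef
    have hQsub : Q ⊆ {p : ℝ × ℝ × ℝ | 0 ≤ p.1 ∧ p.1 ≤ ε} := by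
      intro p hp
      exact ⟨hp.1.1, hp.1.2⟩
    have hQc : IsCompact Q := isCompact_Icc.prod (isCompact_Icc.prod isCompact_Icc)
    have hVcont : ContinuousOn V Q :=
      (hwcont.mono hQsub).sub ((continuous_const.mul continuous_fst).continuousOn)
    have hpQ : (z, x, y) ∈ Q := by
      refine ⟨⟨hz, hzε⟩, ⟨hxR.1, hxR.2⟩, ⟨hyR.1, hyR.2⟩⟩
    obtain ⟨p₀, hp₀Q, hp₀max⟩ := hQc.exists_isMaxOn ⟨_, hpQ⟩ hVcont
    obtain ⟨z₀, x₀, y₀⟩ := p₀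
    obtain ⟨⟨hz₀0, hz₀ε⟩, ⟨hx₀l, hx₀r⟩, hy₀l, hy₀r⟩ := hp₀Q
    dsimp only at hz₀0 hz₀ε hx₀l hx₀r hy₀l hy₀r
    -- the maximum of V over Q is at most δ/2
    have hVmax : V (z₀, x₀, y₀) ≤ δ / 2 := by
      show w z₀ x₀ y₀ - η * z₀ ≤ δ / 2
      have hηz₀ : 0 ≤ η * z₀ := mul_nonneg hηpos.le hz₀0
      rcases eq_or_lt_of_le hz₀0 with h0 | hz₀pos
      · have h1 : w z₀ x₀ y₀ ≤ 0 := by rw [← h0]; exact hbc0 x₀ y₀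
        linarith
      rcases eq_or_lt_of_le hz₀ε with hzε' | hz₀lt
      · have h1 : w z₀ x₀ y₀ ≤ 0 := by rw [hzε']; exact hbcε x₀ y₀
        linarith
      by_cases hbdry : R ^ 2 ≤ x₀ ^ 2 + y₀ ^ 2
      · have h1 := hR₀ z₀ x₀ y₀ hz₀0 hz₀ε (by rw [← hRsq]; exact hbdry)
        linarith
      push_neg at hbdry
      -- interior case: contradiction
      exfalso
      have habs' : ∀ a : ℝ, a ^ 2 < R ^ 2 → -R < a ∧ a < R := by
        intro a ha
        have h1 : |a| < R := by
          have := Real.sqrt_lt_sqrt (sq_nonneg a) ha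
          rwa [Real.sqrt_sq_eq_abs, Real.sqrt_sq hRnn] at this
        exact abs_lt.mp h1
      obtain ⟨hx₀l', hx₀r'⟩ := habs' x₀ (by nlinarith [sq_nonneg y₀])
      obtain ⟨hy₀l', hy₀r'⟩ := habs' y₀ (by nlinarith [sq_nonneg x₀])
      -- Q is a neighborhood of the interior point p₀
      have hQnhds : Q ∈ 𝓝 (z₀, x₀, y₀) := by
        have hO : IsOpen (Ioo 0 ε ×ˢ (Ioo (-R) R ×ˢ Ioo (-R) R)) :=
          isOpen_Ioo.prod (isOpen_Ioo.prod isOpen_Ioo)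
        refine Filter.mem_of_superset
          (hO.mem_nhds ⟨⟨hz₀pos, hz₀lt⟩, ⟨hx₀l', hx₀r'⟩, ⟨hy₀l', hy₀r'⟩⟩) ?_
        intro p hp
        exact ⟨⟨hp.1.1.le, hp.1.2.le⟩, ⟨hp.2.1.1.le, hp.2.1.2.le⟩, hp.2.2.1.le, hp.2.2.2.le⟩
      have hloc : IsLocalMax V (z₀, x₀, y₀) := hp₀max.isLocalMax hQnhds
      set U : Set (ℝ × ℝ × ℝ) := {p : ℝ × ℝ × ℝ | 0 < p.1 ∧ p.1 < ε} with hUdef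
      -- slice in the first variable
      have hf1 : ContDiffOn ℝ 2 (fun t : ℝ => w t x₀ y₀) (Ioo 0 ε) := by
        have he : ContDiff ℝ 2 (fun t : ℝ => ((t, x₀, y₀) : ℝ × ℝ × ℝ)) :=
          contDiff_id.prodMk contDiff_const
        exact hwC2.comp he.contDiffOn (fun t ht => ⟨ht.1, ht.2⟩)
      have hf2 : ContDiffOn ℝ 2 (fun t : ℝ => w z₀ t y₀) univ := by
        have he : ContDiff ℝ 2 (fun t : ℝ => ((z₀, t, y₀) : ℝ × ℝ × ℝ)) :=
          contDiff_const.prodMk (contDiff_id.prodMk contDiff_const)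
        exact hwC2.comp he.contDiffOn (fun t _ => ⟨hz₀pos, hz₀lt⟩)
      have hf3 : ContDiffOn ℝ 2 (fun t : ℝ => w z₀ x₀ t) univ := by
        have he : ContDiff ℝ 2 (fun t : ℝ => ((z₀, x₀, t) : ℝ × ℝ × ℝ)) :=
          contDiff_const.prodMk (contDiff_const.prodMk contDiff_id)
        exact hwC2.comp he.contDiffOn (fun t _ => ⟨hz₀pos, hz₀lt⟩)
      -- differentiability facts for slice 1
      have hz₀mem : z₀ ∈ Ioo 0 ε := ⟨hz₀pos, hz₀lt⟩
      have hev1 : ∀ᶠ t in 𝓝 z₀, DifferentiableAt ℝ (fun s : ℝ => w s x₀ y₀) t := by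
        filter_upwards [isOpen_Ioo.eventually_mem hz₀mem] with t ht
        exact (hf1.differentiableOn (by norm_num)).differentiableAt (isOpen_Ioo.mem_nhds ht)
      have hder1 : ContDiffOn ℝ 1 (deriv (fun s : ℝ => w s x₀ y₀)) (Ioo 0 ε) :=
        hf1.deriv_of_isOpen isOpen_Ioo (by norm_num)
      have hder1' : DifferentiableAt ℝ (deriv (fun s : ℝ => w s x₀ y₀)) z₀ :=
        (hder1.differentiableOn (by norm_num)).differentiableAt (isOpen_Ioo.mem_nhds hz₀mem)
      -- local max of the z-slice of V
      have hmax1 : IsLocalMax (fun t : ℝ => w t x₀ y₀ - η * t) z₀ := by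
        have hc : Continuous (fun t : ℝ => ((t, x₀, y₀) : ℝ × ℝ × ℝ)) :=
          continuous_id.prodMk continuous_const
        exact IsLocalMax.comp_continuous (g := fun t : ℝ => ((t, x₀, y₀) : ℝ × ℝ × ℝ))
          hloc hc.continuousAt
      -- relate deriv of the z-slice of V to deriv of w-slice
      have hge : deriv (fun t : ℝ => w t x₀ y₀ - η * t)
          =ᶠ[𝓝 z₀] fun t => deriv (fun s : ℝ => w s x₀ y₀) t - η := by
        filter_upwards [hev1] with t ht
        have h1 : HasDerivAt (fun s : ℝ => η * s) η t := by
          simpa using (hasDerivAt_id t).const_mul η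
        exact (ht.hasDerivAt.sub h1).deriv
      have hd1zero : deriv (fun s : ℝ => w s x₀ y₀) z₀ = η := by
        have h0 : deriv (fun t : ℝ => w t x₀ y₀ - η * t) z₀ = 0 := hmax1.deriv_eq_zero
        have h1 := hge.self_of_nhds
        simp only [h0] at h1
        linarith
      -- second derivative of the z-slice of V
      have hdiffg1 : DifferentiableAt ℝ (deriv (fun t : ℝ => w t x₀ y₀ - η * t)) z₀ :=
        (hder1'.sub_const η).congr_of_eventuallyEq hge
      have hevg1 : ∀ᶠ t in 𝓝 z₀, DifferentiableAt ℝ (fun t : ℝ => w t x₀ y₀ - η * t) t := by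
        filter_upwards [hev1] with t ht
        exact ht.sub (by fun_prop)
      have h2nd1 : deriv (deriv (fun s : ℝ => w s x₀ y₀)) z₀ ≤ 0 := by
        have := second_deriv_nonpos_of_isLocalMax hmax1 hevg1 hdiffg1
        have heq : deriv (deriv (fun t : ℝ => w t x₀ y₀ - η * t)) z₀
            = deriv (deriv (fun s : ℝ => w s x₀ y₀)) z₀ := by
          rw [hge.deriv_eq]
          exact deriv_sub_const η
        linarith [heq ▸ this]
      -- slices 2 and 3
      have hmax2 : IsLocalMax (fun t : ℝ => w z₀ t y₀) x₀ := by
        have hc : Continuous (fun t : ℝ => ((z₀, t, y₀) : ℝ × ℝ × ℝ)) :=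
          continuous_const.prodMk (continuous_id.prodMk continuous_const)
        have h := IsLocalMax.comp_continuous (g := fun t : ℝ => ((z₀, t, y₀) : ℝ × ℝ × ℝ))
          hloc hc.continuousAt
        refine h.mono fun t ht => ?_
        have ht' : w z₀ t y₀ - η * z₀ ≤ w z₀ x₀ y₀ - η * z₀ := ht
        linarith
      have hmax3 : IsLocalMax (fun t : ℝ => w z₀ x₀ t) y₀ := by
        have hc : Continuous (fun t : ℝ => ((z₀, x₀, t) : ℝ × ℝ × ℝ)) :=
          continuous_const.prodMk (continuous_const.prodMk continuous_id)
        have h := IsLocalMax.comp_continuous (g := fun t : ℝ => ((z₀, x₀, t) : ℝ × ℝ × ℝ))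
          hloc hc.continuousAt
        refine h.mono fun t ht => ?_
        have ht' : w z₀ x₀ t - η * z₀ ≤ w z₀ x₀ y₀ - η * z₀ := ht
        linarith
      have hev2 : ∀ᶠ t in 𝓝 x₀, DifferentiableAt ℝ (fun s : ℝ => w z₀ s y₀) t := by
        filter_upwards with t
        exact (hf2.differentiableOn (by norm_num)).differentiableAt
          (by simp [isOpen_univ.mem_nhds])
      have hder2' : DifferentiableAt ℝ (deriv (fun s : ℝ => w z₀ s y₀)) x₀ :=
        ((hf2.deriv_of_isOpen (m := 1) isOpen_univ (by norm_num)).differentiableOn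
          (by norm_num)).differentiableAt (by simp [isOpen_univ.mem_nhds])
      have hev3 : ∀ᶠ t in 𝓝 y₀, DifferentiableAt ℝ (fun s : ℝ => w z₀ x₀ s) t := by
        filter_upwards with t
        exact (hf3.differentiableOn (by norm_num)).differentiableAt
          (by simp [isOpen_univ.mem_nhds])
      have hder3' : DifferentiableAt ℝ (deriv (fun s : ℝ => w z₀ x₀ s)) y₀ :=
        ((hf3.deriv_of_isOpen (m := 1) isOpen_univ (by norm_num)).differentiableOn
          (by norm_num)).differentiableAt (by simp [isOpen_univ.mem_nhds])
      have h2nd2 : deriv (deriv (fun s : ℝ => w z₀ s y₀)) x₀ ≤ 0 :=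
        second_deriv_nonpos_of_isLocalMax hmax2 hev2 hder2'
      have h2nd3 : deriv (deriv (fun s : ℝ => w z₀ x₀ s)) y₀ ≤ 0 :=
        second_deriv_nonpos_of_isLocalMax hmax3 hev3 hder3'
      -- contradiction with subharmonicity
      have hs := hsub z₀ x₀ y₀ hz₀pos hz₀lt
      have e0 : pd1 w z₀ x₀ y₀ = deriv (fun s : ℝ => w s x₀ y₀) z₀ := rfl
      have e1 : pd1 (pd1 w) z₀ x₀ y₀ = deriv (deriv (fun s : ℝ => w s x₀ y₀)) z₀ := rfl
      have e2 : pd2 (pd2 w) z₀ x₀ y₀ = deriv (deriv (fun s : ℝ => w z₀ s y₀)) x₀ := rfl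
      have e3 : pd3 (pd3 w) z₀ x₀ y₀ = deriv (deriv (fun s : ℝ => w z₀ x₀ s)) y₀ := rfl
      rw [e0, e1, e2, e3, hd1zero] at hs
      have hzz : z₀ * (deriv (deriv fun s => w s x₀ y₀) z₀
          + deriv (deriv fun s => w z₀ s y₀) x₀
          + deriv (deriv fun s => w z₀ x₀ s) y₀) ≤ 0 :=
        mul_nonpos_of_nonneg_of_nonpos hz₀pos.le (by linarith)
      linarith
    -- conclude at the original point
    have hVp : V (z, x, y) ≤ δ / 2 := le_trans (hp₀max hpQ) hVmax
    have hVp' : w z x y - η * z ≤ δ / 2 := hVp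
    have : η * z ≤ δ / 2 := by
      have := mul_le_mul_of_nonneg_left hzε hηpos.le
      linarith
    linarith
  -- finish: w ≤ δ for all δ > 0
  intro z x y hz hzε
  by_contra h
  push_neg at h
  have := key (w z x y / 2) (by linarith) z x y hz hzε
  linarith
end
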